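/- arXiv:2409.15952 — 3 statements merged into one kernel-verified Lean document; each statement's English description precedes it below -/
import Mathlib

section
/- Let n ≥ 1, let W : Fin n → Fin n → ℝ be symmetric with nonnegative entries and W i i = 0, let L be the graph Laplacian L i i = ∑_j W i j, L i j = -W i j (i ≠ j), let m : Fin n → ℝ be strictly positive, M = diag(m), and τ > 0. If x, y : Fin n → ℝ satisfy M (x - y) + τ • L x = 0, then the solution satisfies the discrete maximum principle: for every index i, (min over j of y j) ≤ x i ≤ (max over j of y j). -/
open Matrix

/-- Discrete maximum principle for one implicit time step of the finite volume
scheme: every new pixel intensity lies between the minimum and the maximum of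
the previous pixel intensities. -/
theorem implicit_step_maximum_principle
    (n : ℕ) (hn : 1 ≤ n) (W : Fin n → Fin n → ℝ)
    (hWsym : ∀ i j, W i j = W j i) (hWnn : ∀ i j, 0 ≤ W i j)
    (hWdiag : ∀ i, W i i = 0)
    (L : Matrix (Fin n) (Fin n) ℝ)
    (hLdiag : ∀ i, L i i = ∑ j, W i j)
    (hLoff : ∀ i j, i ≠ j → L i j = - W i j)
    (m : Fin n → ℝ) (hm : ∀ i, 0 < m i)
    (τ : ℝ) (hτ : 0 < τ)
    (x y : Fin n → ℝ)
    (hstep : (Matrix.diagonal m).mulVec (x - y) + τ • L.mulVec x = 0) :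
    ∀ i,
      Finset.univ.inf' (Finset.univ_nonempty_iff.mpr ⟨⟨0, hn⟩⟩) y ≤ x i ∧
      x i ≤ Finset.univ.sup' (Finset.univ_nonempty_iff.mpr ⟨⟨0, hn⟩⟩) y := by
  -- Row formula for the Laplacian
  have hrow : ∀ i, L.mulVec x i = ∑ j, W i j * (x i - x j) := by
    intro i
    have key : ∀ j, L i j * x j =
        W i j * (x i - x j) - W i j * x i +
          (if j = i then (∑ k, W i k) * x i else 0) := by
      intro j
      by_cases h : j = i
      · subst h
        simp [hLdiag, hWdiag]
      · rw [hLoff i j (fun hh => h hh.symm)]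
        simp [h]; ring
    have h1 : L.mulVec x i = ∑ j, L i j * x j := rfl
    rw [h1]
    calc ∑ j, L i j * x j
        = ∑ j, (W i j * (x i - x j) - W i j * x i +
            (if j = i then (∑ k, W i k) * x i else 0)) :=
          Finset.sum_congr rfl (fun j _ => key j)
      _ = (∑ j, W i j * (x i - x j)) - (∑ j, W i j * x i) +
            ∑ j, (if j = i then (∑ k, W i k) * x i else 0) := by
          rw [Finset.sum_add_distrib, Finset.sum_sub_distrib]
      _ = ∑ j, W i j * (x i - x j) := by
          rw [Finset.sum_ite_eq' Finset.univ i (fun _ => (∑ k, W i k) * x i),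
            ← Finset.sum_mul]
          simp
  -- Pointwise equation
  have heq : ∀ i, m i * (x i - y i) + τ * ∑ j, W i j * (x i - x j) = 0 := by
    intro i
    have := congrFun hstep i
    simpa [Matrix.mulVec_diagonal, hrow i, Pi.add_apply, Pi.smul_apply] using this
  intro i
  constructor
  · -- lower bound
    obtain ⟨i0, -, hi0⟩ := Finset.exists_min_image Finset.univ x
      (Finset.univ_nonempty_iff.mpr ⟨⟨0, hn⟩⟩)
    have hsum : (∑ j, W i0 j * (x i0 - x j)) ≤ 0 :=
      Finset.sum_nonpos fun j _ =>
        mul_nonpos_of_nonneg_of_nonpos (hWnn i0 j)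
          (sub_nonpos.mpr (hi0 j (Finset.mem_univ j)))
    have h1 : 0 ≤ m i0 * (x i0 - y i0) := by
      have := heq i0; nlinarith
    have h2 : y i0 ≤ x i0 := by
      have := (hm i0); nlinarith
    calc Finset.univ.inf' (Finset.univ_nonempty_iff.mpr ⟨⟨0, hn⟩⟩) y ≤ y i0 :=
          Finset.inf'_le _ (Finset.mem_univ i0)
      _ ≤ x i0 := h2
      _ ≤ x i := hi0 i (Finset.mem_univ i)
  · -- upper bound
    obtain ⟨i0, -, hi0⟩ := Finset.exists_max_image Finset.univ x
      (Finset.univ_nonempty_iff.mpr ⟨⟨0, hn⟩⟩)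
    have hsum : 0 ≤ (∑ j, W i0 j * (x i0 - x j)) :=
      Finset.sum_nonneg fun j _ =>
        mul_nonneg (hWnn i0 j) (sub_nonneg.mpr (hi0 j (Finset.mem_univ j)))
    have h1 : m i0 * (x i0 - y i0) ≤ 0 := by
      have := heq i0; nlinarith
    have h2 : x i0 ≤ y i0 := by
      have := (hm i0); nlinarith
    calc x i ≤ x i0 := hi0 i (Finset.mem_univ i)
      _ ≤ y i0 := h2
      _ ≤ Finset.univ.sup' (Finset.univ_nonempty_iff.mpr ⟨⟨0, hn⟩⟩) y :=
          Finset.le_sup' _ (Finset.mem_univ i0)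
end

section
/- Let n ≥ 1, let W : Fin n → Fin n → ℝ be symmetric with nonnegative entries and W i i = 0, let L be the graph Laplacian L i i = ∑_j W i j, L i j = -W i j (i ≠ j), let m : Fin n → ℝ be strictly positive, M = diag(m), and τ > 0. If x, y : Fin n → ℝ satisfy M (x - y) + τ • L x = 0, then the implicit step is stable in the weighted L² norm: ∑_i m i * (x i)^2 ≤ ∑_i m i * (y i)^2. -/
open Matrix

/-- Stability of the implicit step in the weighted L² norm:
`∑ᵢ mᵢ xᵢ² ≤ ∑ᵢ mᵢ yᵢ²`. -/
theorem implicit_step_weighted_L2_stability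
    (n : ℕ) (hn : 1 ≤ n) (W : Fin n → Fin n → ℝ)
    (hWsym : ∀ i j, W i j = W j i) (hWnn : ∀ i j, 0 ≤ W i j)
    (hWdiag : ∀ i, W i i = 0)
    (L : Matrix (Fin n) (Fin n) ℝ)
    (hLdiag : ∀ i, L i i = ∑ j, W i j)
    (hLoff : ∀ i j, i ≠ j → L i j = - W i j)
    (m : Fin n → ℝ) (hm : ∀ i, 0 < m i)
    (τ : ℝ) (hτ : 0 < τ)
    (x y : Fin n → ℝ)
    (hstep : (Matrix.diagonal m).mulVec (x - y) + τ • L.mulVec x = 0) :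
    ∑ i, m i * (x i) ^ 2 ≤ ∑ i, m i * (y i) ^ 2 := by
  have hL : ∀ i j, L i j = (if i = j then ∑ k, W i k else 0) - W i j := by
    intro i j
    by_cases h : i = j
    · subst h; simp [hLdiag i, hWdiag i]
    · rw [hLoff i j h, if_neg h]; ring
  set Q : ℝ := ∑ i, x i * L.mulVec x i with hQdef
  have hQsum : Q = ∑ i, ∑ j, W i j * x i * (x i - x j) := by
    rw [hQdef]
    refine Finset.sum_congr rfl fun i _ => ?_
    have h1 : x i * L.mulVec x i = ∑ j, x i * (L i j * x j) := by
      simp [Matrix.mulVec, dotProduct, Finset.mul_sum]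
    rw [h1]
    have h2 : ∀ j : Fin n, x i * (L i j * x j) =
        (if i = j then (∑ k, W i k) * (x i * x j) else 0) - W i j * (x i * x j) := by
      intro j
      rw [hL i j]
      by_cases h : i = j
      · subst h; simp; ring
      · simp [h]; ring
    rw [Finset.sum_congr rfl fun j _ => h2 j, Finset.sum_sub_distrib,
      Finset.sum_ite_eq Finset.univ i fun j => (∑ k, W i k) * (x i * x j)]
    simp only [Finset.mem_univ, if_true]
    rw [Finset.sum_mul, ← Finset.sum_sub_distrib]
    refine Finset.sum_congr rfl fun j _ => ?_
    ring
  have hQQ : 2 * Q = ∑ i, ∑ j, W i j * (x i - x j) ^ 2 := by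
    have hswap : Q = ∑ i, ∑ j, W i j * x j * (x j - x i) := by
      rw [hQsum, Finset.sum_comm]
      exact Finset.sum_congr rfl fun j _ => Finset.sum_congr rfl fun i _ => by
        rw [hWsym i j]
    calc 2 * Q = (∑ i, ∑ j, W i j * x i * (x i - x j)) + ∑ i, ∑ j, W i j * x j * (x j - x i) := by
          rw [← hQsum, ← hswap]; ring
      _ = ∑ i, ∑ j, W i j * (x i - x j) ^ 2 := by
          rw [← Finset.sum_add_distrib]
          exact Finset.sum_congr rfl fun i _ => by
            rw [← Finset.sum_add_distrib]
            exact Finset.sum_congr rfl fun j _ => by ring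
  have hQnn : 0 ≤ Q := by
    nlinarith [Finset.sum_nonneg (fun i (_ : i ∈ Finset.univ) =>
      Finset.sum_nonneg (fun j (_ : j ∈ Finset.univ) =>
        mul_nonneg (hWnn i j) (sq_nonneg (x i - x j))))]
  have hpt : ∀ i, m i * (x i - y i) = -(τ * L.mulVec x i) := by
    intro i
    have := congrFun hstep i
    simp only [Pi.add_apply, Pi.smul_apply, smul_eq_mul, Pi.zero_apply,
      Matrix.mulVec_diagonal, Pi.sub_apply] at this
    linarith
  set S1 : ℝ := ∑ i, m i * x i ^ 2 with hS1
  set S2 : ℝ := ∑ i, m i * (x i * y i) with hS2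
  set S3 : ℝ := ∑ i, m i * y i ^ 2 with hS3
  have hA : S1 - S2 = -(τ * Q) := by
    calc S1 - S2 = ∑ i, x i * (m i * (x i - y i)) := by
          rw [hS1, hS2, ← Finset.sum_sub_distrib]
          exact Finset.sum_congr rfl fun i _ => by ring
      _ = ∑ i, x i * (-(τ * L.mulVec x i)) := Finset.sum_congr rfl fun i _ => by rw [hpt i]
      _ = -(τ * Q) := by
          rw [hQdef, Finset.mul_sum, ← Finset.sum_neg_distrib]
          exact Finset.sum_congr rfl fun i _ => by ring
  have hB : 0 ≤ S1 - 2 * S2 + S3 := by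
    have h0 : 0 ≤ ∑ i, m i * (x i - y i) ^ 2 :=
      Finset.sum_nonneg fun i _ => mul_nonneg (hm i).le (sq_nonneg _)
    have heq : ∑ i, m i * (x i - y i) ^ 2 = S1 - 2 * S2 + S3 := by
      rw [hS1, hS2, hS3, Finset.mul_sum, ← Finset.sum_sub_distrib, ← Finset.sum_add_distrib]
      exact Finset.sum_congr rfl fun i _ => by ring
    linarith
  have : S1 ≤ ∑ i, m i * (y i) ^ 2 := by
    rw [← hS3] at *
    nlinarith [mul_nonneg hτ.le hQnn]
  simpa [hS1] using this
end

section
/- Let n, H ≥ 1, let W : Fin n → Fin n → ℝ be symmetric with nonnegative entries and W i i = 0, let L be the graph Laplacian L i i = ∑_j W i j, L i j = -W i j (i ≠ j), let m : Fin n → ℝ be strictly positive, M = diag(m), τ > 0, and let R : Matrix (Fin H) (Fin n) ℝ have linearly independent rows. Set L_H = R * L * Rᵀ and M_H = R * M * Rᵀ. If the coarse vectors x, y : Fin H → ℝ satisfy M_H.mulVec (x - y) + τ • L_H.mulVec x = 0, then the reconstructed fine-grid solution u = Rᵀ.mulVec x satisfies the weighted stability estimate ∑_i m i * (u i)^2 ≤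 ∑_i m i * ((Rᵀ.mulVec y) i)^2. -/
open Matrix

/-- Stability of the coarse-scale (GMsFEM) implicit step in the weighted `M`-norm
of the reconstructed fine-grid solution `u = Rᵀ x`. -/
theorem coarse_step_weighted_stability
    (n H : ℕ) (hn : 1 ≤ n) (hH : 1 ≤ H)
    (W : Fin n → Fin n → ℝ)
    (hWsym : ∀ i j, W i j = W j i) (hWnn : ∀ i j, 0 ≤ W i j)
    (hWdiag : ∀ i, W i i = 0)
    (L : Matrix (Fin n) (Fin n) ℝ)
    (hLdiag : ∀ i, L i i = ∑ j, W i j)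
    (hLoff : ∀ i j, i ≠ j → L i j = - W i j)
    (m : Fin n → ℝ) (hm : ∀ i, 0 < m i)
    (τ : ℝ) (hτ : 0 < τ)
    (R : Matrix (Fin H) (Fin n) ℝ)
    (hR : LinearIndependent ℝ (fun i : Fin H => R i))
    (x y : Fin H → ℝ)
    (hstep : (R * Matrix.diagonal m * Rᵀ).mulVec (x - y)
        + τ • (R * L * Rᵀ).mulVec x = 0) :
    ∑ i, m i * (Rᵀ.mulVec x i) ^ 2 ≤ ∑ i, m i * (Rᵀ.mulVec y i) ^ 2 := by
  set u : Fin n → ℝ := Rᵀ.mulVec x with hu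
  set v : Fin n → ℝ := Rᵀ.mulVec y with hv
  -- L as explicit formula
  have hLform : ∀ i j, L i j = (if i = j then ∑ k, W i k else 0) - W i j := by
    intro i j
    by_cases h : i = j
    · subst h; simp [hLdiag i, hWdiag i]
    · simp [h, hLoff i j h]
  -- quadratic form of L is nonneg
  have hLpsd : 0 ≤ u ⬝ᵥ L.mulVec u := by
    have key : 2 * (u ⬝ᵥ L.mulVec u) = ∑ i, ∑ j, W i j * (u i - u j) ^ 2 := by
      have h1 : u ⬝ᵥ L.mulVec u = ∑ i, ∑ j, L i j * (u i * u j) := by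
        simp only [dotProduct, Matrix.mulVec, Finset.mul_sum]
        exact Finset.sum_congr rfl fun i _ => Finset.sum_congr rfl fun j _ => by ring
      rw [h1]
      have h2 : ∀ i : Fin n, ∑ j, L i j * (u i * u j)
          = (∑ k, W i k) * u i ^ 2 - ∑ j, W i j * (u i * u j) := by
        intro i
        have : ∀ j : Fin n, L i j * (u i * u j)
            = (if i = j then (∑ k, W i k) * (u i * u j) else 0) - W i j * (u i * u j) := by
          intro j
          rw [hLform i j]
          by_cases h : i = j <;> simp [h] <;> ring
        have e : ∑ j, L i j * (u i * u j)
            = (∑ j, (if i = j then (∑ k, W i k) * (u i * u j) else 0))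
              - ∑ j, W i j * (u i * u j) := by
          rw [← Finset.sum_sub_distrib]
          exact Finset.sum_congr rfl fun j _ => this j
        rw [e, Finset.sum_ite_eq Finset.univ i (fun j => (∑ k, W i k) * (u i * u j))]
        simp only [Finset.mem_univ, if_true]
        ring
      simp only [h2]
      have h3 : ∑ i, ∑ j, W i j * (u i - u j) ^ 2
          = ∑ i, ∑ j, (W i j * u i ^ 2 + W i j * u j ^ 2 - 2 * (W i j * (u i * u j))) := by
        exact Finset.sum_congr rfl fun i _ => Finset.sum_congr rfl fun j _ => by ring
      rw [h3]
      have hsymsum : ∑ i, ∑ j, W i j * u j ^ 2 = ∑ i, ∑ j, W i j * u i ^ 2 := by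
        rw [Finset.sum_comm]
        exact Finset.sum_congr rfl fun j _ => Finset.sum_congr rfl fun i _ => by
          rw [hWsym i j]
      simp only [Finset.sum_add_distrib, Finset.sum_sub_distrib, hsymsum, ← Finset.mul_sum,
        ← Finset.sum_mul]
      ring
    have hnn : 0 ≤ ∑ i, ∑ j, W i j * (u i - u j) ^ 2 :=
      Finset.sum_nonneg fun i _ => Finset.sum_nonneg fun j _ =>
        mul_nonneg (hWnn i j) (sq_nonneg _)
    linarith [key]
  -- dot the step equation with x and pull Rᵀ through
  have hdot : u ⬝ᵥ (Matrix.diagonal m).mulVec (u - v) + τ * (u ⬝ᵥ L.mulVec u) = 0 := by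
    have h0 : x ⬝ᵥ ((R * Matrix.diagonal m * Rᵀ).mulVec (x - y)
        + τ • (R * L * Rᵀ).mulVec x) = 0 := by rw [hstep]; simp
    have pull : ∀ (A : Matrix (Fin n) (Fin n) ℝ) (z : Fin H → ℝ),
        x ⬝ᵥ (R * A * Rᵀ).mulVec z = u ⬝ᵥ A.mulVec (Rᵀ.mulVec z) := by
      intro A z
      rw [show R * A * Rᵀ = R * (A * Rᵀ) from by rw [Matrix.mul_assoc],
        ← Matrix.mulVec_mulVec, Matrix.dotProduct_mulVec, ← Matrix.mulVec_transpose,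
        ← Matrix.mulVec_mulVec, hu]
    have huv : Rᵀ.mulVec (x - y) = u - v := by
      rw [Matrix.mulVec_sub, hu, hv]
    rw [dotProduct_add, dotProduct_smul, pull, pull, huv, smul_eq_mul, hu] at h0
    exact h0
  have hdot' : ∑ i, m i * (u i * (u i - v i)) ≤ 0 := by
    have hq : u ⬝ᵥ (Matrix.diagonal m).mulVec (u - v) = ∑ i, m i * (u i * (u i - v i)) := by
      simp only [dotProduct, Matrix.mulVec_diagonal]
      exact Finset.sum_congr rfl fun i _ => by simp only [Pi.sub_apply]; ring
    nlinarith [mul_nonneg (le_of_lt hτ) hLpsd]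
  -- Cauchy–Schwarz with weights
  set a : ℝ := ∑ i, m i * u i ^ 2 with ha
  set b : ℝ := ∑ i, m i * v i ^ 2 with hb
  set S : ℝ := ∑ i, m i * (u i * v i) with hS
  have haS : a ≤ S := by
    have : a - S ≤ 0 := by
      have : a - S = ∑ i, m i * (u i * (u i - v i)) := by
        rw [ha, hS, ← Finset.sum_sub_distrib]
        exact Finset.sum_congr rfl fun i _ => by ring
      rw [this]; exact hdot'
    linarith
  have hCS : S ^ 2 ≤ a * b := by
    have := Finset.sum_mul_sq_le_sq_mul_sq Finset.univ
      (fun i => Real.sqrt (m i) * u i) (fun i => Real.sqrt (m i) * v i)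
    have hmsq : ∀ i : Fin n, Real.sqrt (m i) * Real.sqrt (m i) = m i := fun i =>
      Real.mul_self_sqrt (le_of_lt (hm i))
    have e1 : ∑ i, (Real.sqrt (m i) * u i) * (Real.sqrt (m i) * v i) = S := by
      rw [hS]; exact Finset.sum_congr rfl fun i _ => by
        rw [show Real.sqrt (m i) * u i * (Real.sqrt (m i) * v i)
          = (Real.sqrt (m i) * Real.sqrt (m i)) * (u i * v i) from by ring, hmsq i]
    have e2 : ∑ i, (Real.sqrt (m i) * u i) ^ 2 = a := by
      rw [ha]; exact Finset.sum_congr rfl fun i _ => by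
        rw [mul_pow, sq, hmsq i]
    have e3 : ∑ i, (Real.sqrt (m i) * v i) ^ 2 = b := by
      rw [hb]; exact Finset.sum_congr rfl fun i _ => by
        rw [mul_pow, sq, hmsq i]
    rw [e1, e2, e3] at this
    exact this
  have ha0 : 0 ≤ a := Finset.sum_nonneg fun i _ =>
    mul_nonneg (le_of_lt (hm i)) (sq_nonneg _)
  have hb0 : 0 ≤ b := Finset.sum_nonneg fun i _ =>
    mul_nonneg (le_of_lt (hm i)) (sq_nonneg _)
  -- conclude a ≤ b
  nlinarith [haS, hCS, ha0, hb0, sq_nonneg (a - S)]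
end
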